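/- Let G be a topological group, Y a real locally convex space, and V ⊆ G an open subset. For k ≥ 1, compact sets K₁ ⊆ 𝔏(G)^k and K₂ ⊆ V, and a continuous seminorm |·| on Y, define q_{K₁,K₂}(f) := sup{|(D^R_{γ_k}⋯D^R_{γ₁}f)(x)| : (γ₁,…,γ_k) ∈ K₁, x ∈ K₂} for f ∈ C^∞(V,Y), together with f ↦ sup_{x∈K₂}|f(x)|. Then these seminorms are well defined on C^∞(V,Y) and determine the same locally convex topology on C^∞(V,Y) as the seminorms p_{K₁,K₂} built from the left directional derivatives D_γ. -/

import Mathlib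

open Filter Topology MeasureTheory
open scoped Topology

noncomputable section

/-- The set of continuous one-parameter subgroups of a topological group `G`,
topologized as a subspace of `C(ℝ, G)` (compact-open topology, i.e. topology of
uniform convergence on compact subsets of `ℝ`). -/
def OneParam (G : Type*) [TopologicalSpace G] [Group G] : Type _ :=
  {γ : C(ℝ, G) // ∀ t s : ℝ, γ (t + s) = γ t * γ s}

instance (G : Type*) [TopologicalSpace G] [Group G] : TopologicalSpace (OneParam G) :=
  inferInstanceAs (TopologicalSpace {γ : C(ℝ, G) // ∀ t s : ℝ, γ (t + s) = γ t * γ s})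

section DirDeriv

variable {G : Type*} [TopologicalSpace G] [Group G]
variable {Y : Type*} [TopologicalSpace Y] [AddCommGroup Y] [Module ℝ Y]

/-- `φ` has directional derivative `w` at `g` along the one-parameter subgroup `γ`:
`w = lim_{t → 0} (φ(g·γ(t)) - φ(g))/t`. -/
def HasDirDerivAt (φ : G → Y) (γ : OneParam G) (g : G) (w : Y) : Prop :=
  Tendsto (fun t : ℝ => t⁻¹ • (φ (g * γ.1 t) - φ g)) (𝓝[≠] (0 : ℝ)) (𝓝 w)

/-- The directional derivative `(D_γ φ)(g) = lim_{t → 0} (φ(g·γ(t)) - φ(g))/t`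
(junk value if the limit does not exist). -/
def dirDeriv (φ : G → Y) (γ : OneParam G) (g : G) : Y :=
  haveI : Nonempty Y := ⟨0⟩
  limUnder (𝓝[≠] (0 : ℝ)) (fun t : ℝ => t⁻¹ • (φ (g * γ.1 t) - φ g))

/-- The right directional derivative `(D^R_γ φ)(g) = lim_{t → 0} (φ(γ(-t)·g) - φ(g))/t`. -/
def rightDirDeriv (φ : G → Y) (γ : OneParam G) (g : G) : Y :=
  haveI : Nonempty Y := ⟨0⟩
  limUnder (𝓝[≠] (0 : ℝ)) (fun t : ℝ => t⁻¹ • (φ (γ.1 (-t) * g) - φ g))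

/-- Iterated directional derivatives: `iteratedD φ k γ g = (D_{γ k}(⋯(D_{γ 1} φ)⋯))(g)`,
with the innermost derivative taken along `γ 0`. -/
def iteratedD (φ : G → Y) : (k : ℕ) → (Fin k → OneParam G) → G → Y
  | 0, _ => φ
  | (k + 1), γ => dirDeriv (iteratedD φ k (fun i => γ i.castSucc)) (γ (Fin.last k))

/-- `φ ∈ C^∞(G, Y)`: `φ` is continuous and all of its iterated directional derivatives
exist everywhere and are jointly continuous. -/
def IsCSmooth (φ : G → Y) : Prop :=
  Continuous φ ∧ ∀ k : ℕ,
    (∀ (γ : Fin (k + 1) → OneParam G) (g : G),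
      HasDirDerivAt (iteratedD φ k (fun i => γ i.castSucc)) (γ (Fin.last k)) g
        (iteratedD φ (k + 1) γ g)) ∧
    Continuous (fun p : (Fin (k + 1) → OneParam G) × G => iteratedD φ (k + 1) p.1 p.2)

theorem IsCSmooth.continuous_iteratedD {φ : G → Y} (hφ : IsCSmooth φ) (k : ℕ) :
    Continuous (fun p : (Fin k → OneParam G) × G => iteratedD φ k p.1 p.2) := by
  cases k with
  | zero => exact hφ.1.comp continuous_snd
  | succ k => exact (hφ.2 k).2

end DirDeriv

/-- A continuous unitary representation of a topological group `G` on a complex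
Hilbert space `H`. -/
structure UnitaryRep (G : Type*) (H : Type*) [TopologicalSpace G] [Group G]
    [NormedAddCommGroup H] [InnerProductSpace ℂ H] where
  toFun : G → H →L[ℂ] H
  map_one' : toFun 1 = 1
  map_mul' : ∀ x y : G, toFun (x * y) = (toFun x).comp (toFun y)
  inner_map' : ∀ (x : G) (v w : H), (inner ℂ (toFun x v) (toFun x w) : ℂ) = inner ℂ v w
  surjective' : ∀ x : G, Function.Surjective (toFun x)
  continuous' : Continuous fun p : G × H => toFun p.1 p.2

namespace UnitaryRep

variable {G : Type*} [TopologicalSpace G] [Group G]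
variable {H : Type*} [NormedAddCommGroup H] [InnerProductSpace ℂ H]

/-- The space of smooth vectors `H_∞` of a representation. -/
def smoothVec (π : UnitaryRep G H) : Set H :=
  {v : H | IsCSmooth fun g : G => π.toFun g v}

/-- `dπ(γ)v = lim_{t → 0} (π(γ(t))v - v)/t`. -/
def dpi (π : UnitaryRep G H) (γ : OneParam G) (v : H) : H :=
  dirDeriv (fun g : G => π.toFun g v) γ 1

/-- The moment map `Ψ_π(v)(γ) = (1/i)⟨dπ(γ)v, v⟩/⟨v, v⟩`, viewed as an element of
`ℝ^{𝔏(G)}`. -/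
def momentMap (π : UnitaryRep G H) (v : H) : OneParam G → ℝ :=
  fun γ => ((inner ℂ v (π.dpi γ v) : ℂ) / (inner ℂ v v : ℂ) / Complex.I).re

/-- The image `I⁰_π = Ψ_π(H_∞ \ {0})` of the moment map. -/
def momentSet0 (π : UnitaryRep G H) : Set (OneParam G → ℝ) :=
  π.momentMap '' (π.smoothVec \ {0})

/-- The closed moment set `I_π`, the closure of `I⁰_π` in `ℝ^{𝔏(G)}` with the
topology of pointwise convergence. -/
def momentSet (π : UnitaryRep G H) : Set (OneParam G → ℝ) :=
  closure π.momentSet0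

end UnitaryRep

end
noncomputable section
open Filter Topology
open scoped Classical

section OnDefs

variable {G : Type*} [TopologicalSpace G] [Group G]
variable {Y : Type*} [TopologicalSpace Y] [AddCommGroup Y] [Module ℝ Y]

/-- The directional derivative `(D_γ φ)(g)` of a function on an open set `V ⊆ G`
(only values of `φ` on `V` matter; junk value if the limit does not exist). -/
def dirDerivOn (V : Set G) (φ : G → Y) (γ : OneParam G) (g : G) : Y :=
  haveI : Nonempty Y := ⟨0⟩
  limUnder (𝓝[≠] (0 : ℝ))
    (fun t : ℝ => if g * γ.1 t ∈ V then t⁻¹ • (φ (g * γ.1 t) - φ g) else 0)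

/-- The right directional derivative `(D^R_γ φ)(g) = lim_{t→0} (φ(γ(−t)g) − φ(g))/t`
of a function on an open set `V ⊆ G`. -/
def rightDirDerivOn (V : Set G) (φ : G → Y) (γ : OneParam G) (g : G) : Y :=
  haveI : Nonempty Y := ⟨0⟩
  limUnder (𝓝[≠] (0 : ℝ))
    (fun t : ℝ => if γ.1 (-t) * g ∈ V then t⁻¹ • (φ (γ.1 (-t) * g) - φ g) else 0)

/-- Iterated directional derivatives `(D_{γ k}⋯D_{γ 1}φ)` on `V`. -/
def iteratedDOn (V : Set G) (φ : G → Y) : (k : ℕ) → (Fin k → OneParam G) → G → Y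
  | 0, _ => φ
  | (k + 1), γ => dirDerivOn V (iteratedDOn V φ k (fun i => γ i.castSucc)) (γ (Fin.last k))

/-- Iterated right directional derivatives `(D^R_{γ k}⋯D^R_{γ 1}φ)` on `V`. -/
def iteratedRDOn (V : Set G) (φ : G → Y) : (k : ℕ) → (Fin k → OneParam G) → G → Y
  | 0, _ => φ
  | (k + 1), γ =>
      rightDirDerivOn V (iteratedRDOn V φ k (fun i => γ i.castSucc)) (γ (Fin.last k))

/-- `φ ∈ C^∞(V, Y)`: `φ` is continuous on `V` and all of its iterated directional
derivatives exist at every point of `V` and are jointly continuous on `𝔏(G)^k × V`. -/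
def IsCSmoothOn (V : Set G) (φ : G → Y) : Prop :=
  ContinuousOn φ V ∧ ∀ k : ℕ,
    (∀ (γ : Fin (k + 1) → OneParam G), ∀ g ∈ V,
      Tendsto (fun t : ℝ =>
          if g * (γ (Fin.last k)).1 t ∈ V then
            t⁻¹ • (iteratedDOn V φ k (fun i => γ i.castSucc) (g * (γ (Fin.last k)).1 t)
              - iteratedDOn V φ k (fun i => γ i.castSucc) g)
          else 0)
        (𝓝[≠] (0 : ℝ)) (𝓝 (iteratedDOn V φ (k + 1) γ g))) ∧
    ContinuousOn (fun p : (Fin (k + 1) → OneParam G) × G => iteratedDOn V φ (k + 1) p.1 p.2)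
      (Set.univ ×ˢ V)

/-- The seminorm `p_{K₁,K₂}(φ) = sup {ν((D_{γ k}⋯D_{γ 1}φ)(x)) : γ ∈ K₁, x ∈ K₂}` built
from left directional derivatives (for `k = 0` this is `sup_{x ∈ K₂} ν(φ(x))`). -/
def leftSemiOn (V : Set G) (k : ℕ) (K₁ : Set (Fin k → OneParam G)) (K₂ : Set G)
    (ν : Seminorm ℝ Y) (φ : G → Y) : ℝ :=
  sSup ((fun q : (Fin k → OneParam G) × G => ν (iteratedDOn V φ k q.1 q.2)) '' (K₁ ×ˢ K₂))

/-- The seminorm `q_{K₁,K₂}(φ) = sup {ν((D^R_{γ k}⋯D^R_{γ 1}φ)(x)) : γ ∈ K₁, x ∈ K₂}`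
built from right directional derivatives. -/
def rightSemiOn (V : Set G) (k : ℕ) (K₁ : Set (Fin k → OneParam G)) (K₂ : Set G)
    (ν : Seminorm ℝ Y) (φ : G → Y) : ℝ :=
  sSup ((fun q : (Fin k → OneParam G) × G => ν (iteratedRDOn V φ k q.1 q.2)) '' (K₁ ×ˢ K₂))

end OnDefs

section Aux

open Filter Topology Set

variable {G : Type*} [TopologicalSpace G] [Group G] [IsTopologicalGroup G]
variable {Y : Type*} [TopologicalSpace Y] [AddCommGroup Y] [Module ℝ Y]

/-! ### One-parameter subgroup basics -/

theorem OneParam.map_add (γ : OneParam G) (t s : ℝ) : γ.1 (t + s) = γ.1 t * γ.1 s := γ.2 t s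

theorem OneParam.map_zero (γ : OneParam G) : γ.1 0 = 1 := by
  have h := γ.2 0 0
  rw [add_zero] at h
  exact left_eq_mul.1 h

theorem OneParam.map_neg (γ : OneParam G) (t : ℝ) : γ.1 (-t) = (γ.1 t)⁻¹ := by
  have h := γ.2 t (-t)
  rw [add_neg_cancel, OneParam.map_zero] at h
  exact eq_inv_of_mul_eq_one_right h.symm

theorem OneParam.continuous_eval : Continuous fun p : OneParam G × ℝ => p.1.1 p.2 := by
  exact (ContinuousEval.continuous_eval (F := C(ℝ, G))).comp
    ((continuous_subtype_val.comp continuous_fst).prodMk continuous_snd)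

/-- conjugation-with-reversal: `cj g γ = (t ↦ g⁻¹ γ(-t) g)`. -/
def cj (g : G) (γ : OneParam G) : OneParam G :=
  ⟨⟨fun t => g⁻¹ * γ.1 (-t) * g, by
      exact ((continuous_const.mul (γ.1.continuous.comp continuous_neg)).mul continuous_const)⟩,
    by
      intro t s
      simp only [ContinuousMap.coe_mk, neg_add, γ.2]
      group⟩

@[simp] theorem cj_apply (g : G) (γ : OneParam G) (t : ℝ) :
    (cj g γ).1 t = g⁻¹ * γ.1 (-t) * g := rfl

/-- `cS η s μ = (t ↦ η(-s) μ(t) η(s))`. -/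
def cS (η : OneParam G) (s : ℝ) (μ : OneParam G) : OneParam G :=
  ⟨⟨fun t => η.1 (-s) * μ.1 t * η.1 s, by
      exact (continuous_const.mul μ.1.continuous).mul continuous_const⟩,
    by
      intro t s'
      have h1 : η.1 s * η.1 (-s) = 1 := by rw [← η.2, add_neg_cancel, OneParam.map_zero]
      simp only [ContinuousMap.coe_mk, μ.2, mul_assoc]
      rw [← mul_assoc (η.1 s) (η.1 (-s)), h1, one_mul]⟩

@[simp] theorem cS_apply (η : OneParam G) (s : ℝ) (μ : OneParam G) (t : ℝ) :
    (cS η s μ).1 t = η.1 (-s) * μ.1 t * η.1 s := rfl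

@[simp] theorem cS_zero (η : OneParam G) (μ : OneParam G) : cS η 0 μ = μ := by
  apply Subtype.ext; apply ContinuousMap.ext; intro t
  simp [cS, OneParam.map_zero]

theorem cj_mul (g : G) (η : OneParam G) (s : ℝ) (μ : OneParam G) :
    cj (g * η.1 s) μ = cS η s (cj g μ) := by
  apply Subtype.ext; apply ContinuousMap.ext; intro t
  simp only [cj_apply, cS_apply, OneParam.map_neg, mul_inv_rev]
  group

theorem cj_cj (g : G) (μ : OneParam G) : cj g (cj g⁻¹ μ) = μ := by
  apply Subtype.ext; apply ContinuousMap.ext; intro t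
  simp only [cj_apply, inv_inv, neg_neg]
  group

theorem continuous_cj : Continuous fun p : G × OneParam G => cj p.1 p.2 := by
  apply Continuous.subtype_mk
  apply ContinuousMap.continuous_of_continuous_uncurry
  have : Continuous fun q : (G × OneParam G) × ℝ => q.1.2.1 (-q.2) :=
    OneParam.continuous_eval.comp ((continuous_snd.comp continuous_fst).prodMk continuous_snd.neg)
  exact ((continuous_fst.fst.inv.mul this).mul continuous_fst.fst : _)

theorem continuous_cS : Continuous fun p : (OneParam G × ℝ) × OneParam G =>
    cS p.1.1 p.1.2 p.2 := by
  apply Continuous.subtype_mk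
  apply ContinuousMap.continuous_of_continuous_uncurry
  have h1 : Continuous fun q : ((OneParam G × ℝ) × OneParam G) × ℝ => q.1.1.1.1 (-q.1.1.2) :=
    OneParam.continuous_eval.comp
      ((continuous_fst.fst.fst).prodMk (continuous_fst.fst.snd).neg)
  have h2 : Continuous fun q : ((OneParam G × ℝ) × OneParam G) × ℝ => q.1.2.1 q.2 :=
    OneParam.continuous_eval.comp ((continuous_fst.snd).prodMk continuous_snd)
  have h3 : Continuous fun q : ((OneParam G × ℝ) × OneParam G) × ℝ => q.1.1.1.1 q.1.1.2 :=
    OneParam.continuous_eval.comp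
      ((continuous_fst.fst.fst).prodMk (continuous_fst.fst.snd))
  exact (h1.mul h2).mul h3

end Aux

section Aux2

open Filter Topology Set

variable {Y : Type*} [TopologicalSpace Y] [AddCommGroup Y] [Module ℝ Y]

/-- Derivative of a curve into a TVS, as a limit of difference quotients. -/
def HD (F : ℝ → Y) (w : Y) (t : ℝ) : Prop :=
  Tendsto (fun h : ℝ => h⁻¹ • (F (t + h) - F t)) (𝓝[≠] (0 : ℝ)) (𝓝 w)

theorem HD.hasDerivAt {F : ℝ → ℝ} {w t : ℝ} (h : HD F w t) : HasDerivAt F w t := by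
  rw [hasDerivAt_iff_tendsto_slope]
  have hmap : Tendsto (fun s : ℝ => s - t) (𝓝[≠] t) (𝓝[≠] (0 : ℝ)) := by
    rw [tendsto_nhdsWithin_iff]
    constructor
    · have h2 := (continuous_sub_right t).tendsto t
      simp only [sub_self] at h2
      exact h2.mono_left nhdsWithin_le_nhds
    · filter_upwards [self_mem_nhdsWithin] with s hs
      simpa [sub_eq_zero] using hs
  have := h.comp hmap
  apply this.congr
  intro s
  simp only [Function.comp]
  rw [slope_def_field]
  rw [add_sub_cancel]
  rw [smul_eq_mul, div_eq_inv_mul]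

theorem exists_lam (p : Seminorm ℝ Y) (x : Y) :
    ∃ lam : Y →ₗ[ℝ] ℝ, lam x = p x ∧ ∀ y, lam y ≤ p y := by
  by_cases hx : x = 0
  · exact ⟨0, by simp [hx], fun y => by simpa using apply_nonneg p y⟩
  · set f := LinearPMap.mkSpanSingleton (K := ℝ) (L := ℝ) (σ := RingHom.id ℝ) x (p x) hx with hf
    have hdom : ∀ z : f.domain, ∃ c : ℝ, (z : Y) = c • x := by
      intro z
      obtain ⟨c, hc⟩ := Submodule.mem_span_singleton.1 z.2
      exact ⟨c, hc.symm⟩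
    have hfle : ∀ z : f.domain, f z ≤ p z := by
      intro z
      obtain ⟨c, hc⟩ := hdom z
      have hz : z = ⟨c • x, by rw [← hc]; exact z.2⟩ := Subtype.ext hc
      rw [hz]
      rw [LinearPMap.mkSpanSingleton'_apply]
      have : p (c • x) = |c| * p x := by rw [map_smul_eq_mul]; rfl
      rw [this]
      calc c • p x = c * p x := rfl
        _ ≤ |c| * p x := mul_le_mul_of_nonneg_right (le_abs_self c) (apply_nonneg p x)
    obtain ⟨g, hg1, hg2⟩ := exists_extension_of_le_sublinear f p
      (fun c hc y => by rw [map_smul_eq_mul]; rw [Real.norm_eq_abs, abs_of_pos hc])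
      (fun y z => map_add_le_add p y z) hfle
    refine ⟨g, ?_, hg2⟩
    have hx' : x ∈ Submodule.span ℝ ({x} : Set Y) := Submodule.mem_span_singleton_self x
    have := hg1 ⟨x, hx'⟩
    rw [this]
    exact LinearPMap.mkSpanSingleton_apply ℝ ℝ (σ := RingHom.id ℝ) hx (p x)

theorem abs_lam_le {p : Seminorm ℝ Y} {lam : Y →ₗ[ℝ] ℝ} (hle : ∀ y, lam y ≤ p y) (y : Y) :
    |lam y| ≤ p y := by
  rw [abs_le]
  refine ⟨?_, hle y⟩
  have := hle (-y)
  rw [map_neg, map_neg_eq_map] at this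
  linarith

variable [IsTopologicalAddGroup Y] [ContinuousSMul ℝ Y]

theorem lam_tendsto {p : Seminorm ℝ Y} (hp : Continuous p) {lam : Y →ₗ[ℝ] ℝ}
    (hle : ∀ y, lam y ≤ p y) {ι : Type*} {l : Filter ι} {y : ι → Y} {c : Y}
    (h : Tendsto y l (𝓝 c)) : Tendsto (fun i => lam (y i)) l (𝓝 (lam c)) := by
  have h0 : Tendsto (fun i => p (y i - c)) l (𝓝 0) := by
    have : Tendsto (fun i => y i - c) l (𝓝 0) := by
      simpa using h.sub (tendsto_const_nhds (x := c))
    simpa [Function.comp_def] using (hp.tendsto 0).comp this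
  have h1 : Tendsto (fun i => lam (y i) - lam c) l (𝓝 0) := by
    apply squeeze_zero_norm _ h0
    intro i
    rw [← map_sub]
    exact abs_lam_le hle _
  simpa using h1.add_const (lam c)

theorem HD.lam {p : Seminorm ℝ Y} (hp : Continuous p) {lam : Y →ₗ[ℝ] ℝ}
    (hle : ∀ y, lam y ≤ p y) {F : ℝ → Y} {w : Y} {t : ℝ} (h : HD F w t) :
    HasDerivAt (fun x => lam (F x)) (lam w) t := by
  apply HD.hasDerivAt
  have := lam_tendsto hp hle h
  apply this.congr
  intro s
  rw [_root_.map_smul, map_sub]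

variable [LocallyConvexSpace ℝ Y]

theorem tendsto_of_forall_seminorm {ι : Type*} {l : Filter ι} {Q : ι → Y} {w : Y}
    (h : ∀ p : Seminorm ℝ Y, Continuous p → Tendsto (fun i => p (Q i - w)) l (𝓝 0)) :
    Tendsto Q l (𝓝 w) := by
  rw [Filter.tendsto_def]
  intro N hN
  have hN0 : (fun y : Y => y + w) ⁻¹' N ∈ 𝓝 (0 : Y) := by
    apply ContinuousAt.preimage_mem_nhds (by fun_prop)
    simpa using hN
  obtain ⟨C, ⟨hCnhds, hCconv⟩, hCsub⟩ :=
    (LocallyConvexSpace.convex_basis_zero ℝ Y).mem_iff.1 hN0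
  set D := C ∩ (-C) with hD
  have hDnhds : D ∈ 𝓝 (0 : Y) := by
    refine Filter.inter_mem hCnhds ?_
    have : (fun y : Y => -y) ⁻¹' C ∈ 𝓝 (0 : Y) := by
      apply ContinuousAt.preimage_mem_nhds (by fun_prop)
      simpa using hCnhds
    simpa [Set.neg_preimage] using this
  have hDconv : Convex ℝ D := hCconv.inter (hCconv.neg)
  have hD0 : (0 : Y) ∈ D := by
    constructor
    · exact mem_of_mem_nhds hCnhds
    · simpa using mem_of_mem_nhds hCnhds
  have hDsymm : ∀ y ∈ D, -y ∈ D := by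
    rintro y ⟨h1, h2⟩
    exact ⟨h2, by simpa using h1⟩
  have hDbal : Balanced ℝ D := by
    intro a ha
    rintro z ⟨y, hy, rfl⟩
    rcases le_or_gt 0 a with h0 | h0
    · exact hDconv.smul_mem_of_zero_mem hD0 hy ⟨h0, by simpa [abs_of_nonneg h0] using ha⟩
    · show a • y ∈ D
      have heq : a • y = (-a) • (-y) := by simp
      rw [heq]
      refine hDconv.smul_mem_of_zero_mem hD0 (hDsymm y hy) ⟨by linarith, ?_⟩
      rw [Real.norm_eq_abs, abs_of_neg h0] at ha
      linarith
  have hDabs : Absorbent ℝ D := absorbent_nhds_zero hDnhds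
  set p := gaugeSeminorm (𝕜 := ℝ) hDbal hDconv hDabs with hpdef
  have hpgauge : ∀ y, p y = gauge D y := fun y => rfl
  have hpcont : Continuous p := by
    have := continuous_gauge (E := Y) hDconv hDnhds
    exact this
  have hev : ∀ᶠ i in l, p (Q i - w) < 1 := (h p hpcont).eventually (gt_mem_nhds one_pos)
  filter_upwards [hev] with i hi
  have hmem : Q i - w ∈ D := by
    apply gauge_lt_one_subset_self hDconv hD0 hDabs
    exact hi
  have : Q i - w ∈ (fun y : Y => y + w) ⁻¹' N := hCsub (hmem.1)
  simpa using this

end Aux2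

section Aux3

open Filter Topology Set

variable {Y : Type*} [TopologicalSpace Y] [AddCommGroup Y] [Module ℝ Y]
variable [IsTopologicalAddGroup Y] [ContinuousSMul ℝ Y] [LocallyConvexSpace ℝ Y]

theorem schwarz {f f₁ f₂ f₁₂ : ℝ → ℝ → Y} {a b ε : ℝ} (hε : 0 < ε)
    (h₁ : ∀ u s, |u - a| < ε → |s - b| < ε → HD (fun u' => f u' s) (f₁ u s) u)
    (h₂ : ∀ u s, |u - a| < ε → |s - b| < ε → HD (fun s' => f u s') (f₂ u s) s)
    (h₁₂ : ∀ u s, |u - a| < ε → |s - b| < ε → HD (fun u' => f₂ u' s) (f₁₂ u s) u)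
    (hc : ContinuousAt (fun q : ℝ × ℝ => f₁₂ q.1 q.2) (a, b)) :
    HD (fun s => f₁ a s) (f₁₂ a b) b := by
  set w := f₁₂ a b with hw
  apply tendsto_of_forall_seminorm
  intro p hp
  rw [NormedAddCommGroup.tendsto_nhds_zero]
  intro ε' hε'
  -- rectangle on which `p (f₁₂ - w)` is small
  have hcc : ContinuousAt (fun q : ℝ × ℝ => p (f₁₂ q.1 q.2 - w)) (a, b) :=
    hp.continuousAt.comp (hc.sub continuousAt_const)
  have hval : p (f₁₂ a b - w) = 0 := by simp [hw]
  have h0 : ∀ᶠ q : ℝ × ℝ in 𝓝 (a, b), p (f₁₂ q.1 q.2 - w) < ε' / 2 := by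
    have h0' := hcc.eventually_lt_const (show p (f₁₂ a b - w) < ε'/2 by rw [hval]; linarith)
    exact h0'
  rw [Metric.eventually_nhds_iff] at h0
  obtain ⟨δ₀, hδ₀, hrect0⟩ := h0
  set δ : ℝ := min (δ₀ / 2) (ε / 2) with hδdef
  have hδpos : 0 < δ := lt_min (by linarith) (by linarith)
  have hδε : δ < ε := lt_of_le_of_lt (min_le_right _ _) (by linarith)
  have hδδ₀ : δ < δ₀ := lt_of_le_of_lt (min_le_left _ _) (by linarith)
  have hkey : ∀ σ τ : ℝ, |σ| ≤ δ → |τ| ≤ δ → p (f₁₂ (a + σ) (b + τ) - w) ≤ ε' / 2 := by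
    intro σ τ hσ hτ
    refine le_of_lt (hrect0 (y := (a + σ, b + τ)) ?_)
    rw [Prod.dist_eq]
    apply max_lt <;> rw [Real.dist_eq] <;> simp only [add_sub_cancel_left]
    · exact lt_of_le_of_lt hσ hδδ₀
    · exact lt_of_le_of_lt hτ hδδ₀
  have hin : ∀ σ τ : ℝ, |σ| ≤ δ → |τ| ≤ δ → |a + σ - a| < ε ∧ |b + τ - b| < ε := by
    intro σ τ hσ hτ
    constructor <;> simp only [add_sub_cancel_left] <;> linarith [hσ, hτ]
  -- main double-difference estimate
  have hmain : ∀ s t : ℝ, 0 < |s| → |s| ≤ δ → 0 < |t| → |t| ≤ δ →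
      p ((s * t)⁻¹ • (f (a + s) (b + t) - f (a + s) b - f a (b + t) + f a b) - w)
        ≤ ε' / 2 := by
    intro s t hs0 hsδ ht0 htδ
    set Δ : Y := f (a + s) (b + t) - f (a + s) b - f a (b + t) + f a b with hΔ
    set x₀ : Y := Δ - (s * t) • w with hx₀
    obtain ⟨lam, hlamx, hlamle⟩ := exists_lam p x₀
    have hrs : ∀ r c : ℝ, r ∈ Icc (0:ℝ) 1 → |c| ≤ δ → |r * c| ≤ δ := by
      intro r c hr hc'
      rw [abs_mul]
      calc |r| * |c| ≤ 1 * |c| := by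
            apply mul_le_mul_of_nonneg_right _ (abs_nonneg c)
            rw [abs_of_nonneg hr.1]; exact hr.2
        _ = |c| := one_mul _
        _ ≤ δ := hc'
    -- inner estimate (differentiate in the first variable)
    have inner : ∀ τ : ℝ, |τ| ≤ δ →
        |lam (f₂ (a + s) (b + τ) - f₂ a (b + τ)) - s * lam w| ≤ ε' / 2 * |s| := by
      intro τ hτ
      have hder : ∀ r ∈ Icc (0:ℝ) 1, HasDerivWithinAt
          (fun r' => lam (f₂ (a + r' * s) (b + τ)) - r' * (s * lam w))
          (s * lam (f₁₂ (a + r * s) (b + τ) - w)) (Icc 0 1) r := by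
        intro r hr
        have hmem := hin (r * s) τ (hrs r s hr hsδ) hτ
        have hd1 : HasDerivAt (fun u' => lam (f₂ u' (b + τ)))
            (lam (f₁₂ (a + r * s) (b + τ))) (a + r * s) :=
          HD.lam hp hlamle (h₁₂ (a + r * s) (b + τ) hmem.1 hmem.2)
        have hpath : HasDerivAt (fun r' : ℝ => a + r' * s) s r := by
          simpa using ((hasDerivAt_id r).mul_const s).const_add a
        have hcomp := HasDerivAt.comp r hd1 hpath
        have hlin : HasDerivAt (fun r' : ℝ => r' * (s * lam w)) (s * lam w) r := by
          simpa using (hasDerivAt_id r).mul_const (s * lam w)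
        have hsum := hcomp.sub hlin
        have heq : lam (f₁₂ (a + r * s) (b + τ)) * s - s * lam w
            = s * lam (f₁₂ (a + r * s) (b + τ) - w) := by
          rw [map_sub]; ring
        rw [heq] at hsum
        exact hsum.hasDerivWithinAt
      have hbound : ∀ r ∈ Ico (0:ℝ) 1,
          ‖s * lam (f₁₂ (a + r * s) (b + τ) - w)‖ ≤ ε' / 2 * |s| := by
        intro r hr
        rw [Real.norm_eq_abs, abs_mul, mul_comm]
        apply mul_le_mul_of_nonneg_right _ (abs_nonneg s)
        calc |lam (f₁₂ (a + r * s) (b + τ) - w)| ≤ p (f₁₂ (a + r * s) (b + τ) - w) :=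
              abs_lam_le hlamle _
          _ ≤ ε' / 2 := hkey (r * s) τ (hrs r s ⟨hr.1, hr.2.le⟩ hsδ) hτ
      have hseg := norm_image_sub_le_of_norm_deriv_le_segment_01' hder hbound
      simp only [one_mul, zero_mul, add_zero, sub_zero, Real.norm_eq_abs] at hseg
      have hgoal : lam (f₂ (a + s) (b + τ) - f₂ a (b + τ)) - s * lam w
          = lam (f₂ (a + s) (b + τ)) - s * lam w - lam (f₂ a (b + τ)) := by
        rw [map_sub]; ring
      rw [hgoal]
      exact hseg
    -- outer estimate (differentiate in the second variable)
    have houter : ∀ r ∈ Icc (0:ℝ) 1, HasDerivWithinAt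
        (fun r' => lam (f (a + s) (b + r' * t) - f a (b + r' * t)) - r' * (t * (s * lam w)))
        (t * (lam (f₂ (a + s) (b + r * t) - f₂ a (b + r * t)) - s * lam w)) (Icc 0 1) r := by
      intro r hr
      have hmem1 := hin s (r * t) hsδ (hrs r t hr htδ)
      have hmem2 := hin 0 (r * t) (by simpa using hδpos.le) (hrs r t hr htδ)
      have hd1 : HasDerivAt (fun s' => lam (f (a + s) s'))
          (lam (f₂ (a + s) (b + r * t))) (b + r * t) :=
        HD.lam hp hlamle (h₂ (a + s) (b + r * t) hmem1.1 hmem1.2)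
      have hd2 : HasDerivAt (fun s' => lam (f a s'))
          (lam (f₂ a (b + r * t))) (b + r * t) := by
        have := HD.lam hp hlamle (h₂ a (b + r * t) (by simpa using hε) hmem2.2)
        simpa using this
      have hpath : HasDerivAt (fun r' : ℝ => b + r' * t) t r := by
        simpa using ((hasDerivAt_id r).mul_const t).const_add b
      have hcomp1 := HasDerivAt.comp r hd1 hpath
      have hcomp2 := HasDerivAt.comp r hd2 hpath
      have hlin : HasDerivAt (fun r' : ℝ => r' * (t * (s * lam w))) (t * (s * lam w)) r := by
        simpa using (hasDerivAt_id r).mul_const (t * (s * lam w))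
      have hsum := (hcomp1.sub hcomp2).sub hlin
      have heq : lam (f₂ (a + s) (b + r * t)) * t - lam (f₂ a (b + r * t)) * t
          - t * (s * lam w)
          = t * (lam (f₂ (a + s) (b + r * t) - f₂ a (b + r * t)) - s * lam w) := by
        rw [map_sub]; ring
      have hfn : (fun r' => ((fun s' => lam (f (a + s) s')) ∘ fun r' : ℝ => b + r' * t) r'
          - ((fun s' => lam (f a s')) ∘ fun r' : ℝ => b + r' * t) r'
          - r' * (t * (s * lam w)))
          = fun r' => lam (f (a + s) (b + r' * t) - f a (b + r' * t))
            - r' * (t * (s * lam w)) := by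
        funext r'
        simp only [Function.comp, map_sub]
      rw [heq] at hsum
      rw [← hfn]
      exact hsum.hasDerivWithinAt
    have hbo : ∀ r ∈ Ico (0:ℝ) 1,
        ‖t * (lam (f₂ (a + s) (b + r * t) - f₂ a (b + r * t)) - s * lam w)‖
          ≤ ε' / 2 * |s| * |t| := by
      intro r hr
      rw [Real.norm_eq_abs, abs_mul, mul_comm]
      apply mul_le_mul_of_nonneg_right _ (abs_nonneg t)
      exact inner (r * t) (hrs r t ⟨hr.1, hr.2.le⟩ htδ)
    have hseg := norm_image_sub_le_of_norm_deriv_le_segment_01' houter hbo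
    simp only [one_mul, zero_mul, add_zero, sub_zero, Real.norm_eq_abs] at hseg
    have hlx : |lam x₀| ≤ ε' / 2 * |s| * |t| := by
      have hed : lam x₀ = lam (f (a + s) (b + t) - f a (b + t)) - t * (s * lam w)
          - lam (f (a + s) b - f a b) := by
        rw [hx₀, hΔ]
        simp only [map_sub, map_add, _root_.map_smul, smul_eq_mul]
        ring
      rw [hed]
      exact hseg
    have hpx : p x₀ ≤ ε' / 2 * |s| * |t| := by
      rw [← hlamx]
      exact (le_abs_self _).trans hlx
    have hst : s * t ≠ 0 := mul_ne_zero (abs_pos.1 hs0) (abs_pos.1 ht0)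
    have hrw : (s * t)⁻¹ • Δ - w = (s * t)⁻¹ • x₀ := by
      rw [hx₀, smul_sub, smul_smul, inv_mul_cancel₀ hst, one_smul]
    rw [hrw, map_smul_eq_mul]
    have habs : ‖(s * t)⁻¹‖ = (|s| * |t|)⁻¹ := by
      rw [Real.norm_eq_abs, abs_inv, abs_mul]
    rw [habs]
    have h1 : (|s| * |t|)⁻¹ * p x₀ ≤ (|s| * |t|)⁻¹ * (ε' / 2 * |s| * |t|) :=
      mul_le_mul_of_nonneg_left hpx (by positivity)
    have h2 : (|s| * |t|)⁻¹ * (ε' / 2 * |s| * |t|) = ε' / 2 := by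
      field_simp
    linarith
  -- pointwise bound for the slope of `f₁ a ·`
  have hsmall : ∀ᶠ s in 𝓝[≠] (0:ℝ), |s| ≤ δ ∧ 0 < |s| := by
    have h1 : ∀ᶠ s in 𝓝 (0:ℝ), |s| ≤ δ := by
      filter_upwards [Metric.ball_mem_nhds (0:ℝ) hδpos] with s hs
      rw [Metric.mem_ball, Real.dist_eq, sub_zero] at hs
      exact hs.le
    filter_upwards [h1.filter_mono nhdsWithin_le_nhds, self_mem_nhdsWithin] with s ha hb
    exact ⟨ha, abs_pos.2 hb⟩
  have hQ : ∀ t : ℝ, 0 < |t| → |t| ≤ δ →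
      p (t⁻¹ • (f₁ a (b + t) - f₁ a b) - w) ≤ ε' / 2 := by
    intro t ht0 htδ
    have hA : HD (fun u' => f u' (b + t)) (f₁ a (b + t)) a :=
      h₁ a (b + t) (by simpa using hε) (by simp only [add_sub_cancel_left]; linarith)
    have hB : HD (fun u' => f u' b) (f₁ a b) a :=
      h₁ a b (by simpa using hε) (by simpa using hε)
    have hys : Tendsto (fun s : ℝ => (s * t)⁻¹ •
        (f (a + s) (b + t) - f (a + s) b - f a (b + t) + f a b))
        (𝓝[≠] (0:ℝ)) (𝓝 (t⁻¹ • (f₁ a (b + t) - f₁ a b))) := by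
      have hT := (Filter.Tendsto.sub hA hB).const_smul (t⁻¹)
      apply hT.congr
      intro s
      rw [← smul_sub, smul_smul, ← mul_inv_rev]
      congr 1
      abel
    have hps := ((hp.tendsto _).comp (hys.sub_const w))
    refine le_of_tendsto hps ?_
    filter_upwards [hsmall] with s hs
    exact hmain s t hs.2 hs.1 ht0 htδ
  filter_upwards [hsmall] with t ht
  rw [Real.norm_eq_abs, abs_of_nonneg (apply_nonneg _ _)]
  exact lt_of_le_of_lt (hQ t ht.2 ht.1) (by linarith)

end Aux3

section Aux4

open Filter Topology Set

variable {G : Type*} [TopologicalSpace G] [Group G] [IsTopologicalGroup G]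
variable {Y : Type*} [TopologicalSpace Y] [AddCommGroup Y] [Module ℝ Y]
variable [IsTopologicalAddGroup Y] [ContinuousSMul ℝ Y] [LocallyConvexSpace ℝ Y] [T2Space Y]
variable {V : Set G} {φ : G → Y}

theorem fin_cons_castSucc {n : ℕ} {α : Type*} (x : α) (μ : Fin (n + 1) → α) :
    (fun i : Fin (n + 1) => (Fin.cons x μ : Fin (n + 2) → α) i.castSucc)
      = Fin.cons x (fun i : Fin n => μ i.castSucc) := by
  funext i
  induction i using Fin.cases with
  | zero => simp
  | succ j => simp [← Fin.succ_castSucc, Fin.cons_succ]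

theorem fin_cons_last {n : ℕ} {α : Type*} (x : α) (μ : Fin (n + 1) → α) :
    (Fin.cons x μ : Fin (n + 2) → α) (Fin.last (n + 1)) = μ (Fin.last n) := by
  rw [← Fin.succ_last, Fin.cons_succ]

theorem iteratedDOn_zero (V : Set G) (φ : G → Y) (γ : Fin 0 → OneParam G) :
    iteratedDOn V φ 0 γ = φ := by rw [iteratedDOn]

theorem iteratedDOn_succ (V : Set G) (φ : G → Y) (k : ℕ) (γ : Fin (k + 1) → OneParam G) :
    iteratedDOn V φ (k + 1) γ
      = dirDerivOn V (iteratedDOn V φ k fun i => γ i.castSucc) (γ (Fin.last k)) := by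
  rw [iteratedDOn]

theorem iteratedRDOn_zero (V : Set G) (φ : G → Y) (γ : Fin 0 → OneParam G) :
    iteratedRDOn V φ 0 γ = φ := by rw [iteratedRDOn]

theorem iteratedRDOn_succ (V : Set G) (φ : G → Y) (k : ℕ) (γ : Fin (k + 1) → OneParam G) :
    iteratedRDOn V φ (k + 1) γ
      = rightDirDerivOn V (iteratedRDOn V φ k fun i => γ i.castSucc) (γ (Fin.last k)) := by
  rw [iteratedRDOn]

theorem cS_pt (x : G) (η ζ : OneParam G) (s' u' : ℝ) :
    x * η.1 s' * (cS η s' ζ).1 u' = x * ζ.1 u' * η.1 s' := by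
  simp only [cS_apply]
  have h1 : x * η.1 s' * η.1 (-s') = x := by
    rw [mul_assoc, ← η.2, add_neg_cancel, OneParam.map_zero, mul_one]
  simp only [← mul_assoc]
  rw [h1]

theorem iteratedDOn_cons (η : OneParam G) :
    ∀ (k : ℕ) (μ : Fin k → OneParam G),
      iteratedDOn V φ (k + 1) (Fin.cons η μ) = iteratedDOn V (dirDerivOn V φ η) k μ := by
  intro k
  induction k with
  | zero =>
    intro μ
    rw [iteratedDOn_succ, iteratedDOn_zero, iteratedDOn_zero,
      show (Fin.last 0 : Fin 1) = 0 from rfl, Fin.cons_zero]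
  | succ k IH =>
    intro μ
    rw [iteratedDOn_succ V φ (k + 1) (Fin.cons η μ),
      iteratedDOn_succ V (dirDerivOn V φ η) k μ, fin_cons_castSucc, fin_cons_last, IH]

theorem HD_iteratedDOn (hV : IsOpen V) (hφ : IsCSmoothOn V φ) {k : ℕ}
    (Γ : Fin (k + 1) → OneParam G) (x : G) (u₀ : ℝ)
    (hx : x * (Γ (Fin.last k)).1 u₀ ∈ V) :
    HD (fun u => iteratedDOn V φ k (fun i => Γ i.castSucc) (x * (Γ (Fin.last k)).1 u))
      (iteratedDOn V φ (k + 1) Γ (x * (Γ (Fin.last k)).1 u₀)) u₀ := by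
  set g := x * (Γ (Fin.last k)).1 u₀ with hg
  have h0 := (hφ.2 k).1 Γ g hx
  have hev : ∀ᶠ t in 𝓝[≠] (0 : ℝ), g * (Γ (Fin.last k)).1 t ∈ V := by
    have hcont : Tendsto (fun t : ℝ => g * (Γ (Fin.last k)).1 t) (𝓝 0) (𝓝 g) := by
      have hc : Continuous fun t : ℝ => g * (Γ (Fin.last k)).1 t :=
        continuous_const.mul (Γ (Fin.last k)).1.continuous
      have := hc.tendsto 0
      simpa [OneParam.map_zero] using this
    exact (hcont.eventually (hV.mem_nhds hx)).filter_mono nhdsWithin_le_nhds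
  refine Filter.Tendsto.congr' ?_ h0
  filter_upwards [hev] with t htV
  rw [if_pos htV]
  have hpt : x * (Γ (Fin.last k)).1 (u₀ + t) = g * (Γ (Fin.last k)).1 t := by
    rw [(Γ (Fin.last k)).2 u₀ t, ← mul_assoc]
  rw [hpt]

theorem exch (hV : IsOpen V) (hφ : IsCSmoothOn V φ) (η : OneParam G) :
    ∀ (k : ℕ) (δ : Fin k → OneParam G) (x : G) (s : ℝ), x * η.1 s ∈ V →
      HD (fun s' => iteratedDOn V φ k (fun i => cS η s' (δ i)) (x * η.1 s'))
        (iteratedDOn V (dirDerivOn V φ η) k (fun i => cS η s (δ i)) (x * η.1 s)) s := by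
  intro k
  induction k with
  | zero =>
    intro δ x s hxs
    have h := HD_iteratedDOn hV hφ (fun _ : Fin 1 => η) x s hxs
    rw [iteratedDOn_succ] at h
    simp only [iteratedDOn_zero] at h ⊢
    exact h
  | succ k IH =>
    intro δ x s hxs
    set ζ := δ (Fin.last k) with hζ
    have hm : Continuous fun q : ℝ × ℝ => x * ζ.1 q.1 * η.1 q.2 :=
      (continuous_const.mul (ζ.1.continuous.comp continuous_fst)).mul
        (η.1.continuous.comp continuous_snd)
    have hmem : x * ζ.1 0 * η.1 s ∈ V := by
      rw [OneParam.map_zero, mul_one]; exact hxs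
    obtain ⟨ε, hεpos, hball⟩ := Metric.isOpen_iff.1 (hV.preimage hm) (0, s) hmem
    have hrect : ∀ u s' : ℝ, |u - 0| < ε → |s' - s| < ε → x * ζ.1 u * η.1 s' ∈ V := by
      intro u s' hu hs'
      have hmb : (u, s') ∈ Metric.ball ((0 : ℝ), s) ε := by
        rw [Metric.mem_ball, Prod.dist_eq]
        apply max_lt <;> rw [Real.dist_eq]
        exacts [hu, hs']
      exact hball hmb
    have h1 : ∀ u s' : ℝ, |u - 0| < ε → |s' - s| < ε →
        HD (fun u' => iteratedDOn V φ k (fun i : Fin k => cS η s' (δ i.castSucc))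
            (x * ζ.1 u' * η.1 s'))
          (iteratedDOn V φ (k + 1) (fun i => cS η s' (δ i)) (x * ζ.1 u * η.1 s')) u := by
      intro u s' hu hs'
      have hx' : x * η.1 s' * (cS η s' (δ (Fin.last k))).1 u ∈ V := by
        rw [cS_pt]
        exact hrect u s' hu hs'
      have hHD := HD_iteratedDOn hV hφ (fun i => cS η s' (δ i)) (x * η.1 s') u hx'
      simp only [cS_pt] at hHD
      exact hHD
    have h2 : ∀ u s' : ℝ, |u - 0| < ε → |s' - s| < ε →
        HD (fun s'' => iteratedDOn V φ k (fun i : Fin k => cS η s'' (δ i.castSucc))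
            (x * ζ.1 u * η.1 s''))
          (iteratedDOn V (dirDerivOn V φ η) k (fun i : Fin k => cS η s' (δ i.castSucc))
            (x * ζ.1 u * η.1 s')) s' := by
      intro u s' hu hs'
      exact IH (fun i => δ i.castSucc) (x * ζ.1 u) s' (hrect u s' hu hs')
    have h12 : ∀ u s' : ℝ, |u - 0| < ε → |s' - s| < ε →
        HD (fun u' => iteratedDOn V (dirDerivOn V φ η) k
            (fun i : Fin k => cS η s' (δ i.castSucc)) (x * ζ.1 u' * η.1 s'))
          (iteratedDOn V (dirDerivOn V φ η) (k + 1) (fun i => cS η s' (δ i))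
            (x * ζ.1 u * η.1 s')) u := by
      intro u s' hu hs'
      have hlast : (Fin.cons η (fun i => cS η s' (δ i)) : Fin (k + 2) → OneParam G)
          (Fin.last (k + 1)) = cS η s' ζ := fin_cons_last _ _
      have hx2 : x * η.1 s' *
          ((Fin.cons η (fun i => cS η s' (δ i)) : Fin (k + 2) → OneParam G)
            (Fin.last (k + 1))).1 u ∈ V := by
        rw [hlast, cS_pt]
        exact hrect u s' hu hs'
      have hHD := HD_iteratedDOn hV hφ
        (Fin.cons η (fun i => cS η s' (δ i))) (x * η.1 s') u hx2
      simp only [hlast, fin_cons_castSucc, iteratedDOn_cons, cS_pt] at hHD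
      exact hHD
    have hc : ContinuousAt (fun q : ℝ × ℝ => iteratedDOn V (dirDerivOn V φ η) (k + 1)
        (fun i => cS η q.2 (δ i)) (x * ζ.1 q.1 * η.1 q.2)) (0, s) := by
      have hbig : ContinuousOn
          (fun pr : (Fin (k + 2) → OneParam G) × G => iteratedDOn V φ (k + 2) pr.1 pr.2)
          (Set.univ ×ˢ V) := (hφ.2 (k + 1)).2
      have hcmap : Continuous fun q : ℝ × ℝ =>
          ((Fin.cons η (fun i => cS η q.2 (δ i)) : Fin (k + 2) → OneParam G),
            x * ζ.1 q.1 * η.1 q.2) := by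
        refine Continuous.prodMk ?_ hm
        apply continuous_pi
        intro i
        induction i using Fin.cases with
        | zero => simpa [Fin.cons_zero] using continuous_const
        | succ j =>
          simp only [Fin.cons_succ]
          exact continuous_cS.comp
            ((continuous_const.prodMk continuous_snd).prodMk continuous_const)
      have hCA : ContinuousAt
          (fun pr : (Fin (k + 2) → OneParam G) × G => iteratedDOn V φ (k + 2) pr.1 pr.2)
          ((Fin.cons η (fun i => cS η s (δ i)) : Fin (k + 2) → OneParam G),
            x * ζ.1 0 * η.1 s) := by
        apply hbig.continuousAt
        exact (isOpen_univ.prod hV).mem_nhds ⟨trivial, hmem⟩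
      have := hCA.comp (f := fun q : ℝ × ℝ =>
        ((Fin.cons η (fun i => cS η q.2 (δ i)) : Fin (k + 2) → OneParam G),
          x * ζ.1 q.1 * η.1 q.2)) (x := ((0 : ℝ), s)) hcmap.continuousAt
      have h2 : ContinuousAt (fun q : ℝ × ℝ => iteratedDOn V φ (k + 2)
          (Fin.cons η fun i => cS η q.2 (δ i)) (x * ζ.1 q.1 * η.1 q.2)) ((0 : ℝ), s) := this
      simpa only [iteratedDOn_cons] using h2
    have hsch := schwarz
      (f := fun u s' => iteratedDOn V φ k (fun i : Fin k => cS η s' (δ i.castSucc))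
        (x * ζ.1 u * η.1 s'))
      (f₁ := fun u s' => iteratedDOn V φ (k + 1) (fun i => cS η s' (δ i))
        (x * ζ.1 u * η.1 s'))
      (f₂ := fun u s' => iteratedDOn V (dirDerivOn V φ η) k
        (fun i : Fin k => cS η s' (δ i.castSucc)) (x * ζ.1 u * η.1 s'))
      (f₁₂ := fun u s' => iteratedDOn V (dirDerivOn V φ η) (k + 1)
        (fun i => cS η s' (δ i)) (x * ζ.1 u * η.1 s'))
      (a := 0) (b := s) hεpos h1 h2 h12 hc
    simp only [OneParam.map_zero, mul_one] at hsch
    exact hsch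

end Aux4

section Aux5

open Filter Topology Set

variable {G : Type*} [TopologicalSpace G] [Group G] [IsTopologicalGroup G]
variable {Y : Type*} [TopologicalSpace Y] [AddCommGroup Y] [Module ℝ Y]
variable [IsTopologicalAddGroup Y] [ContinuousSMul ℝ Y] [LocallyConvexSpace ℝ Y] [T2Space Y]
variable {V : Set G} {φ : G → Y}

theorem key_step (hV : IsOpen V) (hφ : IsCSmoothOn V φ) {k : ℕ}
    (IH : ∀ (γ : Fin k → OneParam G) (g : G), g ∈ V →
      iteratedRDOn V φ k γ g = iteratedDOn V φ k (fun i => cj g (γ i.rev)) g)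
    (γ : Fin (k + 1) → OneParam G) (g : G) (hg : g ∈ V) :
    Filter.Tendsto (fun t : ℝ =>
        if (γ (Fin.last k)).1 (-t) * g ∈ V then
          t⁻¹ • (iteratedRDOn V φ k (fun i => γ i.castSucc) ((γ (Fin.last k)).1 (-t) * g)
            - iteratedRDOn V φ k (fun i => γ i.castSucc) g)
        else 0)
      (𝓝[≠] (0 : ℝ)) (𝓝 (iteratedDOn V φ (k + 1) (fun i => cj g (γ i.rev)) g))
    ∧ iteratedRDOn V φ (k + 1) γ g
        = iteratedDOn V φ (k + 1) (fun i => cj g (γ i.rev)) g := by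
  set η := cj g (γ (Fin.last k)) with hη
  have hx0 : g * η.1 0 ∈ V := by rw [OneParam.map_zero, mul_one]; exact hg
  have hE := exch hV hφ η k (fun i => cj g (γ i.rev.castSucc)) g 0 hx0
  have hE' : Tendsto (fun h : ℝ =>
      h⁻¹ • (iteratedDOn V φ k (fun i => cS η (0 + h) (cj g (γ i.rev.castSucc)))
          (g * η.1 (0 + h))
        - iteratedDOn V φ k (fun i => cS η 0 (cj g (γ i.rev.castSucc))) (g * η.1 0)))
      (𝓝[≠] (0 : ℝ))
      (𝓝 (iteratedDOn V (dirDerivOn V φ η) k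
        (fun i => cS η 0 (cj g (γ i.rev.castSucc))) (g * η.1 0))) := hE
  simp only [zero_add, cS_zero, OneParam.map_zero, mul_one] at hE'
  -- value identification
  have hLeq : iteratedDOn V (dirDerivOn V φ η) k (fun i => cj g (γ i.rev.castSucc)) g
      = iteratedDOn V φ (k + 1) (fun i => cj g (γ i.rev)) g := by
    rw [← iteratedDOn_cons]
    congr 1
    funext i
    induction i using Fin.cases with
    | zero => rw [Fin.cons_zero, Fin.rev_zero]
    | succ j => rw [Fin.cons_succ, Fin.rev_succ]
  rw [hLeq] at hE'
  -- eventual membership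
  have hev : ∀ᶠ t in 𝓝[≠] (0 : ℝ), (γ (Fin.last k)).1 (-t) * g ∈ V := by
    have hcont : Tendsto (fun t : ℝ => (γ (Fin.last k)).1 (-t) * g) (𝓝 0) (𝓝 g) := by
      have hc : Continuous fun t : ℝ => (γ (Fin.last k)).1 (-t) * g :=
        ((γ (Fin.last k)).1.continuous.comp continuous_neg).mul continuous_const
      have := hc.tendsto 0
      simpa [OneParam.map_zero] using this
    exact (hcont.eventually (hV.mem_nhds hg)).filter_mono nhdsWithin_le_nhds
  have hpt : ∀ t : ℝ, (γ (Fin.last k)).1 (-t) * g = g * η.1 t := by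
    intro t
    rw [hη]
    simp only [cj_apply]
    group
  have hT : Tendsto (fun t : ℝ =>
      if (γ (Fin.last k)).1 (-t) * g ∈ V then
        t⁻¹ • (iteratedRDOn V φ k (fun i => γ i.castSucc) ((γ (Fin.last k)).1 (-t) * g)
          - iteratedRDOn V φ k (fun i => γ i.castSucc) g)
      else 0)
      (𝓝[≠] (0 : ℝ)) (𝓝 (iteratedDOn V φ (k + 1) (fun i => cj g (γ i.rev)) g)) := by
    refine Filter.Tendsto.congr' ?_ hE'
    filter_upwards [hev] with t htV
    have e1 := IH (fun i => γ i.castSucc) ((γ (Fin.last k)).1 (-t) * g) htV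
    have e2 := IH (fun i => γ i.castSucc) g hg
    rw [if_pos htV, e1, e2]
    simp only [hpt, cj_mul]
  refine ⟨hT, ?_⟩
  rw [iteratedRDOn_succ]
  exact hT.limUnder_eq

theorem key_eq (hV : IsOpen V) (hφ : IsCSmoothOn V φ) :
    ∀ (k : ℕ) (γ : Fin k → OneParam G) (g : G), g ∈ V →
      iteratedRDOn V φ k γ g = iteratedDOn V φ k (fun i => cj g (γ i.rev)) g := by
  intro k
  induction k with
  | zero =>
    intro γ g _
    rw [iteratedRDOn_zero, iteratedDOn_zero]
  | succ k IHk =>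
    intro γ g hg
    exact (key_step hV hφ IHk γ g hg).2

theorem key_tendsto (hV : IsOpen V) (hφ : IsCSmoothOn V φ) (k : ℕ)
    (γ : Fin (k + 1) → OneParam G) (g : G) (hg : g ∈ V) :
    Filter.Tendsto (fun t : ℝ =>
        if (γ (Fin.last k)).1 (-t) * g ∈ V then
          t⁻¹ • (iteratedRDOn V φ k (fun i => γ i.castSucc) ((γ (Fin.last k)).1 (-t) * g)
            - iteratedRDOn V φ k (fun i => γ i.castSucc) g)
        else 0)
      (𝓝[≠] (0 : ℝ)) (𝓝 (iteratedRDOn V φ (k + 1) γ g)) := by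
  obtain ⟨h1, h2⟩ := key_step hV hφ (fun γ' g' hg' => key_eq hV hφ k γ' g' hg') γ g hg
  rw [h2]
  exact h1

end Aux5

section Aux6

open Filter Topology Set

variable {G : Type*} [TopologicalSpace G] [Group G] [IsTopologicalGroup G]
variable {Y : Type*} [TopologicalSpace Y] [AddCommGroup Y] [Module ℝ Y]
variable [IsTopologicalAddGroup Y] [ContinuousSMul ℝ Y] [LocallyConvexSpace ℝ Y] [T2Space Y]
variable {V : Set G} {φ₁ φ₂ : G → Y}

theorem iteratedDOn_sub (hV : IsOpen V) (h₁ : IsCSmoothOn V φ₁) (h₂ : IsCSmoothOn V φ₂) :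
    ∀ (k : ℕ) (μ : Fin k → OneParam G) (g : G), g ∈ V →
      iteratedDOn V (φ₁ - φ₂) k μ g
        = iteratedDOn V φ₁ k μ g - iteratedDOn V φ₂ k μ g := by
  intro k
  induction k with
  | zero =>
    intro μ g _
    simp only [iteratedDOn_zero]
    rfl
  | succ k IH =>
    intro μ g hg
    have t₁ := (h₁.2 k).1 μ g hg
    have t₂ := (h₂.2 k).1 μ g hg
    have hT := t₁.sub t₂
    have hcongr : ∀ t : ℝ,
        (if g * (μ (Fin.last k)).1 t ∈ V then
          t⁻¹ • (iteratedDOn V φ₁ k (fun i => μ i.castSucc) (g * (μ (Fin.last k)).1 t)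
            - iteratedDOn V φ₁ k (fun i => μ i.castSucc) g) else 0)
        - (if g * (μ (Fin.last k)).1 t ∈ V then
          t⁻¹ • (iteratedDOn V φ₂ k (fun i => μ i.castSucc) (g * (μ (Fin.last k)).1 t)
            - iteratedDOn V φ₂ k (fun i => μ i.castSucc) g) else 0)
        = (if g * (μ (Fin.last k)).1 t ∈ V then
          t⁻¹ • (iteratedDOn V (φ₁ - φ₂) k (fun i => μ i.castSucc) (g * (μ (Fin.last k)).1 t)
            - iteratedDOn V (φ₁ - φ₂) k (fun i => μ i.castSucc) g) else 0) := by
      intro t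
      by_cases h : g * (μ (Fin.last k)).1 t ∈ V
      · rw [if_pos h, if_pos h, if_pos h, IH _ _ h, IH _ _ hg, ← smul_sub]
        congr 1
        abel
      · rw [if_neg h, if_neg h, if_neg h, sub_zero]
    have hT2 := hT.congr hcongr
    rw [iteratedDOn_succ]
    exact hT2.limUnder_eq

theorem isCSmoothOn_sub (hV : IsOpen V) (h₁ : IsCSmoothOn V φ₁) (h₂ : IsCSmoothOn V φ₂) :
    IsCSmoothOn V (φ₁ - φ₂) := by
  refine ⟨h₁.1.sub h₂.1, fun k => ⟨?_, ?_⟩⟩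
  · intro μ g hg
    have t₁ := (h₁.2 k).1 μ g hg
    have t₂ := (h₂.2 k).1 μ g hg
    have hT := t₁.sub t₂
    have hcongr : ∀ t : ℝ,
        (if g * (μ (Fin.last k)).1 t ∈ V then
          t⁻¹ • (iteratedDOn V φ₁ k (fun i => μ i.castSucc) (g * (μ (Fin.last k)).1 t)
            - iteratedDOn V φ₁ k (fun i => μ i.castSucc) g) else 0)
        - (if g * (μ (Fin.last k)).1 t ∈ V then
          t⁻¹ • (iteratedDOn V φ₂ k (fun i => μ i.castSucc) (g * (μ (Fin.last k)).1 t)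
            - iteratedDOn V φ₂ k (fun i => μ i.castSucc) g) else 0)
        = (if g * (μ (Fin.last k)).1 t ∈ V then
          t⁻¹ • (iteratedDOn V (φ₁ - φ₂) k (fun i => μ i.castSucc) (g * (μ (Fin.last k)).1 t)
            - iteratedDOn V (φ₁ - φ₂) k (fun i => μ i.castSucc) g) else 0) := by
      intro t
      by_cases h : g * (μ (Fin.last k)).1 t ∈ V
      · rw [if_pos h, if_pos h, if_pos h,
          iteratedDOn_sub hV h₁ h₂ k _ _ h, iteratedDOn_sub hV h₁ h₂ k _ _ hg, ← smul_sub]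
        congr 1
        abel
      · rw [if_neg h, if_neg h, if_neg h, sub_zero]
    have hT2 := hT.congr hcongr
    rw [iteratedDOn_sub hV h₁ h₂ (k + 1) μ g hg]
    exact hT2
  · refine ((h₁.2 k).2.sub (h₂.2 k).2).congr ?_
    rintro ⟨μ, g⟩ ⟨-, hgV⟩
    exact iteratedDOn_sub hV h₁ h₂ (k + 1) μ g hgV

end Aux6

section Aux7

open Filter Topology Set

variable {G : Type*} [TopologicalSpace G] [Group G] [IsTopologicalGroup G]
variable {Y : Type*} [TopologicalSpace Y] [AddCommGroup Y] [Module ℝ Y]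
variable [IsTopologicalAddGroup Y] [ContinuousSMul ℝ Y] [LocallyConvexSpace ℝ Y] [T2Space Y]
variable {V : Set G} {φ : G → Y}

theorem contOn_left (hφ : IsCSmoothOn V φ) (k : ℕ) (ν : Seminorm ℝ Y) (hν : Continuous ν) :
    ContinuousOn (fun q : (Fin k → OneParam G) × G => ν (iteratedDOn V φ k q.1 q.2))
      (Set.univ ×ˢ V) := by
  cases k with
  | zero =>
    simp only [iteratedDOn_zero]
    refine hν.comp_continuousOn ?_
    refine ContinuousOn.comp hφ.1 continuous_snd.continuousOn ?_
    rintro ⟨μ, g⟩ ⟨-, hg⟩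
    exact hg
  | succ j => exact hν.comp_continuousOn (hφ.2 j).2

theorem bdd_left (hφ : IsCSmoothOn V φ) (k : ℕ) {K₁ : Set (Fin k → OneParam G)} {K₂ : Set G}
    (hK₁ : IsCompact K₁) (hK₂ : IsCompact K₂) (hK₂V : K₂ ⊆ V)
    (ν : Seminorm ℝ Y) (hν : Continuous ν) :
    BddAbove ((fun q : (Fin k → OneParam G) × G => ν (iteratedDOn V φ k q.1 q.2))
      '' (K₁ ×ˢ K₂)) := by
  refine ((hK₁.prod hK₂).image_of_continuousOn ?_).bddAbove
  exact (contOn_left hφ k ν hν).mono (Set.prod_mono (Set.subset_univ _) hK₂V)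

theorem bdd_right (hV : IsOpen V) (hφ : IsCSmoothOn V φ) (k : ℕ)
    {K₁ : Set (Fin k → OneParam G)} {K₂ : Set G}
    (hK₁ : IsCompact K₁) (hK₂ : IsCompact K₂) (hK₂V : K₂ ⊆ V)
    (ν : Seminorm ℝ Y) (hν : Continuous ν) :
    BddAbove ((fun q : (Fin k → OneParam G) × G => ν (iteratedRDOn V φ k q.1 q.2))
      '' (K₁ ×ˢ K₂)) := by
  have hmap : Continuous (fun q : (Fin k → OneParam G) × G =>
      ((fun i : Fin k => cj q.2 (q.1 i.rev), q.2) : (Fin k → OneParam G) × G)) := by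
    refine Continuous.prodMk ?_ continuous_snd
    exact continuous_pi fun i => continuous_cj.comp
      (continuous_snd.prodMk ((continuous_apply i.rev).comp continuous_fst))
  have hcont : ContinuousOn (fun q : (Fin k → OneParam G) × G =>
      ν (iteratedDOn V φ k (fun i : Fin k => cj q.2 (q.1 i.rev)) q.2)) (K₁ ×ˢ K₂) := by
    refine (contOn_left hφ k ν hν).comp hmap.continuousOn ?_
    rintro ⟨μ, g⟩ ⟨-, hg⟩
    exact ⟨trivial, hK₂V hg⟩
  have hcongr : Set.EqOn
      (fun q : (Fin k → OneParam G) × G => ν (iteratedRDOn V φ k q.1 q.2))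
      (fun q : (Fin k → OneParam G) × G =>
        ν (iteratedDOn V φ k (fun i : Fin k => cj q.2 (q.1 i.rev)) q.2)) (K₁ ×ˢ K₂) := by
    rintro ⟨μ, g⟩ ⟨-, hg⟩
    show ν (iteratedRDOn V φ k μ g) = _
    rw [key_eq hV hφ k μ g (hK₂V hg)]
  refine ((hK₁.prod hK₂).image_of_continuousOn (hcont.congr hcongr)).bddAbove

end Aux7

/-- The seminorms `q_{K₁,K₂}` built from right directional derivatives are well defined on
`C^∞(V, Y)` (the iterated right derivatives of a smooth function exist at every point of
`V`, and the suprema over compacta are finite), and they determine the same locally convex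
topology on `C^∞(V, Y)` as the seminorms `p_{K₁,K₂}` built from the left directional
derivatives: a filter converges w.r.t. the `p`-seminorms iff it converges w.r.t. the
`q`-seminorms. -/
theorem rightSeminorms_wellDefined_and_determine_same_topology
    (G : Type*) [TopologicalSpace G] [Group G] [IsTopologicalGroup G]
    (Y : Type*) [TopologicalSpace Y] [AddCommGroup Y] [Module ℝ Y]
    [IsTopologicalAddGroup Y] [ContinuousSMul ℝ Y] [LocallyConvexSpace ℝ Y] [T2Space Y]
    (V : Set G) (hV : IsOpen V) :
    (∀ φ : G → Y, IsCSmoothOn V φ →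
      ∀ (k : ℕ) (γ : Fin (k + 1) → OneParam G), ∀ g ∈ V,
        Filter.Tendsto (fun t : ℝ =>
            if (γ (Fin.last k)).1 (-t) * g ∈ V then
              t⁻¹ • (iteratedRDOn V φ k (fun i => γ i.castSucc) ((γ (Fin.last k)).1 (-t) * g)
                - iteratedRDOn V φ k (fun i => γ i.castSucc) g)
            else 0)
          (𝓝[≠] (0 : ℝ)) (𝓝 (iteratedRDOn V φ (k + 1) γ g))) ∧
    (∀ φ : G → Y, IsCSmoothOn V φ →
      ∀ (k : ℕ) (K₁ : Set (Fin k → OneParam G)) (K₂ : Set G) (ν : Seminorm ℝ Y),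
        IsCompact K₁ → IsCompact K₂ → K₂ ⊆ V → Continuous ν →
        BddAbove ((fun q : (Fin k → OneParam G) × G =>
          ν (iteratedRDOn V φ k q.1 q.2)) '' (K₁ ×ˢ K₂))) ∧
    (∀ (F : Filter {φ : G → Y // IsCSmoothOn V φ}) (f : {φ : G → Y // IsCSmoothOn V φ}),
      (∀ (k : ℕ) (K₁ : Set (Fin k → OneParam G)) (K₂ : Set G) (ν : Seminorm ℝ Y),
          IsCompact K₁ → IsCompact K₂ → K₂ ⊆ V → Continuous ν →
          Filter.Tendsto (fun g : {φ : G → Y // IsCSmoothOn V φ} =>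
            leftSemiOn V k K₁ K₂ ν (g.1 - f.1)) F (𝓝 (0 : ℝ)))
        ↔
      (∀ (k : ℕ) (K₁ : Set (Fin k → OneParam G)) (K₂ : Set G) (ν : Seminorm ℝ Y),
          IsCompact K₁ → IsCompact K₂ → K₂ ⊆ V → Continuous ν →
          Filter.Tendsto (fun g : {φ : G → Y // IsCSmoothOn V φ} =>
            rightSemiOn V k K₁ K₂ ν (g.1 - f.1)) F (𝓝 (0 : ℝ)))) := by
  classical
  refine ⟨?_, ?_, ?_⟩
  · intro φ hφ k γ g hg
    exact key_tendsto hV hφ k γ g hg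
  · intro φ hφ k K₁ K₂ ν hK₁ hK₂ hK₂V hν
    exact bdd_right hV hφ k hK₁ hK₂ hK₂V ν hν
  · intro F f
    constructor
    · intro hL k K₁ K₂ ν hK₁ hK₂ hK₂V hν
      set Sm : (Fin k → OneParam G) × G → (Fin k → OneParam G) :=
        fun p => fun i => cj p.2 (p.1 i.rev) with hSm
      have hSc : Continuous Sm := continuous_pi fun i => continuous_cj.comp
        (continuous_snd.prodMk ((continuous_apply i.rev).comp continuous_fst))
      have hK₁' : IsCompact (Sm '' (K₁ ×ˢ K₂)) := (hK₁.prod hK₂).image hSc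
      have hLt := hL k (Sm '' (K₁ ×ˢ K₂)) K₂ ν hK₁' hK₂ hK₂V hν
      refine tendsto_of_tendsto_of_tendsto_of_le_of_le tendsto_const_nhds hLt ?_ ?_
      · intro x
        refine Real.sSup_nonneg ?_
        rintro r ⟨q, -, rfl⟩
        exact apply_nonneg ν _
      · intro x
        show rightSemiOn V k K₁ K₂ ν (x.1 - f.1)
          ≤ leftSemiOn V k (Sm '' (K₁ ×ˢ K₂)) K₂ ν (x.1 - f.1)
        have hψ : IsCSmoothOn V (x.1 - f.1) := isCSmoothOn_sub hV x.2 f.2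
        rcases (K₁ ×ˢ K₂).eq_empty_or_nonempty with hemp | hne
        · have hright : rightSemiOn V k K₁ K₂ ν (x.1 - f.1) = 0 := by
            show sSup _ = (0 : ℝ)
            rw [hemp, Set.image_empty, Real.sSup_empty]
          rw [hright]
          refine Real.sSup_nonneg ?_
          rintro r ⟨q, -, rfl⟩
          exact apply_nonneg ν _
        · refine csSup_le_csSup (bdd_left hψ k hK₁' hK₂ hK₂V ν hν) (hne.image _) ?_
          rintro r ⟨⟨μ, g⟩, hmem, rfl⟩
          have hgV : g ∈ V := hK₂V hmem.2
          refine ⟨(Sm (μ, g), g), ⟨Set.mem_image_of_mem _ hmem, hmem.2⟩, ?_⟩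
          show ν (iteratedDOn V (x.1 - f.1) k (Sm (μ, g)) g)
            = ν (iteratedRDOn V (x.1 - f.1) k μ g)
          rw [key_eq hV hψ k μ g hgV]
    · intro hR k K₁ K₂ ν hK₁ hK₂ hK₂V hν
      set Sm : (Fin k → OneParam G) × G → (Fin k → OneParam G) :=
        fun p => fun i => cj p.2⁻¹ (p.1 i.rev) with hSm
      have hSc : Continuous Sm := continuous_pi fun i => continuous_cj.comp
        (continuous_snd.inv.prodMk ((continuous_apply i.rev).comp continuous_fst))
      have hK₁' : IsCompact (Sm '' (K₁ ×ˢ K₂)) := (hK₁.prod hK₂).image hSc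
      have hRt := hR k (Sm '' (K₁ ×ˢ K₂)) K₂ ν hK₁' hK₂ hK₂V hν
      refine tendsto_of_tendsto_of_tendsto_of_le_of_le tendsto_const_nhds hRt ?_ ?_
      · intro x
        refine Real.sSup_nonneg ?_
        rintro r ⟨q, -, rfl⟩
        exact apply_nonneg ν _
      · intro x
        show leftSemiOn V k K₁ K₂ ν (x.1 - f.1)
          ≤ rightSemiOn V k (Sm '' (K₁ ×ˢ K₂)) K₂ ν (x.1 - f.1)
        have hψ : IsCSmoothOn V (x.1 - f.1) := isCSmoothOn_sub hV x.2 f.2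
        rcases (K₁ ×ˢ K₂).eq_empty_or_nonempty with hemp | hne
        · have hleft : leftSemiOn V k K₁ K₂ ν (x.1 - f.1) = 0 := by
            show sSup _ = (0 : ℝ)
            rw [hemp, Set.image_empty, Real.sSup_empty]
          rw [hleft]
          refine Real.sSup_nonneg ?_
          rintro r ⟨q, -, rfl⟩
          exact apply_nonneg ν _
        · refine csSup_le_csSup (bdd_right hV hψ k hK₁' hK₂ hK₂V ν hν) (hne.image _) ?_
          rintro r ⟨⟨μ, g⟩, hmem, rfl⟩
          have hgV : g ∈ V := hK₂V hmem.2
          refine ⟨(Sm (μ, g), g), ⟨Set.mem_image_of_mem _ hmem, hmem.2⟩, ?_⟩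
          show ν (iteratedRDOn V (x.1 - f.1) k (Sm (μ, g)) g)
            = ν (iteratedDOn V (x.1 - f.1) k μ g)
          rw [key_eq hV hψ k (Sm (μ, g)) g hgV]
          have htup : (fun i : Fin k => cj g (Sm (μ, g) i.rev)) = μ := by
            funext i
            show cj g (cj g⁻¹ (μ i.rev.rev)) = μ i
            rw [Fin.rev_rev, cj_cj]
          rw [htup]


end
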